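/- Let f(x) = (e^{-x}/4)(1+x) - (x/2)K(x)(2+x), where K(x) = (1/2)∫_x^∞ e^{-t}/t dt for x > 0. Then f is monotonically decreasing on (0,∞), f(0) = 1/4, and lim_{x→∞} f(x) = 0; in particular f(x) ≥ 0 for all x ≥ 0. -/

import Mathlib

open MeasureTheory Real Set Filter

noncomputable def K (x : ℝ) : ℝ := (1/2) * ∫ t in Set.Ioi |x|, Real.exp (-t) / t

noncomputable def f (x : ℝ) : ℝ :=
  Real.exp (-x) / 4 * (1 + x) - x / 2 * K x * (2 + x)

lemma g_integrableOn {x : ℝ} (hx : 0 < x) :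
    IntegrableOn (fun t => Real.exp (-t) / t) (Ioi x) := by
  have h1 : IntegrableOn (fun t => Real.exp (-t) / x) (Ioi x) := by
    have := (exp_neg_integrableOn_Ioi x one_pos).div_const x
    simpa [IntegrableOn] using this
  refine h1.mono' ?_ ?_
  · exact ((Real.measurable_exp.comp measurable_neg).div measurable_id).aestronglyMeasurable
  · filter_upwards [ae_restrict_mem measurableSet_Ioi] with t ht
    have htx : x < t := ht
    rw [Real.norm_of_nonneg (div_nonneg (Real.exp_pos _).le (hx.trans htx).le)]
    exact div_le_div_of_nonneg_left (Real.exp_pos _).le hx htx.le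

lemma K_le {x : ℝ} (hx : 0 < x) :
    (∫ t in Ioi x, Real.exp (-t) / t) ≤ Real.exp (-x) / x := by
  have h1 : IntegrableOn (fun t => Real.exp (-t) / x) (Ioi x) := by
    have := (exp_neg_integrableOn_Ioi x one_pos).div_const x
    simpa [IntegrableOn] using this
  calc (∫ t in Ioi x, Real.exp (-t) / t) ≤ ∫ t in Ioi x, Real.exp (-t) / x := by
        refine setIntegral_mono_on (g_integrableOn hx) h1 measurableSet_Ioi ?_
        intro t ht
        exact div_le_div_of_nonneg_left (Real.exp_pos _).le hx (le_of_lt ht)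
    _ = (∫ t in Ioi x, Real.exp (-t)) / x := by rw [integral_div]
    _ = Real.exp (-x) / x := by rw [integral_exp_neg_Ioi]

lemma aux_deriv (t : ℝ) (ht : t ≠ -1) :
    HasDerivAt (fun t => -Real.exp (-t) / (t + 1))
      (Real.exp (-t) * (t + 2) / (t + 1) ^ 2) t := by
  have h1 : HasDerivAt (fun t : ℝ => -Real.exp (-t)) (Real.exp (-t)) t := by
    have := (Real.hasDerivAt_exp (-t)).comp t (hasDerivAt_neg t)
    simpa [Function.comp_def, Pi.neg_def] using this.neg
  have h2 : HasDerivAt (fun t : ℝ => t + 1) 1 t := by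
    simpa using (hasDerivAt_id t).add_const 1
  have := h1.div h2 (by intro h; apply ht; linarith)
  refine this.congr_deriv ?_
  ring

lemma aux_int {x : ℝ} (hx : 0 < x) :
    IntegrableOn (fun t => Real.exp (-t) * (t + 2) / (t + 1) ^ 2) (Ioi x) := by
  have h1 : IntegrableOn (fun t => 2 * Real.exp (-t)) (Ioi x) :=
    by have := (exp_neg_integrableOn_Ioi x one_pos).const_mul 2; simpa [IntegrableOn] using this
  refine h1.mono' ?_ ?_
  · apply Measurable.aestronglyMeasurable
    exact ((Real.measurable_exp.comp measurable_neg).mul (measurable_id.add_const 2)).div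
      ((measurable_id.add_const 1).pow_const 2)
  · filter_upwards [ae_restrict_mem measurableSet_Ioi] with t ht
    have htx : x < t := ht
    have ht0 : 0 < t := hx.trans htx
    have h2 : (0:ℝ) < (t+1)^2 := by positivity
    rw [Real.norm_of_nonneg (by positivity)]
    rw [div_le_iff₀ h2]
    nlinarith [mul_nonneg (Real.exp_pos (-t)).le (by nlinarith : (0:ℝ) ≤ 2*t^2+3*t)]

lemma K_ge {x : ℝ} (hx : 0 < x) :
    Real.exp (-x) / (x + 1) ≤ (∫ t in Ioi x, Real.exp (-t) / t) := by
  have key : (∫ t in Ioi x, Real.exp (-t) * (t + 2) / (t + 1) ^ 2)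
      = Real.exp (-x) / (x + 1) := by
    have hlim : Tendsto (fun t => -Real.exp (-t) / (t + 1)) atTop (nhds 0) := by
      have := (Real.tendsto_exp_neg_atTop_nhds_zero.neg).div_atTop
        (tendsto_atTop_add_const_right atTop 1 tendsto_id)
      simpa using this
    have := integral_Ioi_of_hasDerivAt_of_tendsto
      (f := fun t => -Real.exp (-t) / (t + 1))
      (f' := fun t => Real.exp (-t) * (t + 2) / (t + 1) ^ 2)
      (a := x) ?_ (fun t ht => aux_deriv t (by intro h; have : x < t := ht; linarith))
      (aux_int hx) hlim
    · rw [this]; field_simp; ring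
    · exact (aux_deriv x (by linarith)).continuousAt.continuousWithinAt
  rw [← key]
  refine setIntegral_mono_on (aux_int hx) (g_integrableOn hx) measurableSet_Ioi ?_
  intro t ht
  have ht0 : 0 < t := hx.trans ht
  have h2 : (0:ℝ) < (t+1)^2 := by positivity
  rw [div_le_div_iff₀ h2 ht0]
  nlinarith [Real.exp_pos (-t)]

lemma g_measurable : Measurable (fun t : ℝ => Real.exp (-t) / t) :=
  (Real.measurable_exp.comp measurable_neg).div measurable_id

lemma K_eq {b x : ℝ} (hb : 0 < b) (hx : 0 < x) :
    K x = K b - (1/2) * ∫ t in b..x, Real.exp (-t) / t := by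
  have key : ∀ u v : ℝ, 0 < u → u ≤ v →
      (∫ t in Ioi u, Real.exp (-t) / t)
        = (∫ t in u..v, Real.exp (-t) / t) + ∫ t in Ioi v, Real.exp (-t) / t := by
    intro u v hu huv
    rw [intervalIntegral.integral_of_le huv]
    rw [← setIntegral_union (Ioc_disjoint_Ioi le_rfl) measurableSet_Ioi
      ((g_integrableOn hu).mono_set Ioc_subset_Ioi_self)
      ((g_integrableOn hu).mono_set (Ioi_subset_Ioi huv))]
    rw [Ioc_union_Ioi_eq_Ioi huv]
  unfold K
  rw [abs_of_pos hx, abs_of_pos hb]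
  rcases le_total x b with h | h
  · rw [key x b hx h, intervalIntegral.integral_symm x b]; ring
  · rw [key b x hb h]; ring

lemma K_hasDerivAt {x : ℝ} (hx : 0 < x) :
    HasDerivAt K (-(Real.exp (-x) / x) / 2) x := by
  have hcont : ContinuousAt (fun t : ℝ => Real.exp (-t) / t) x :=
    ((Real.continuous_exp.comp continuous_neg).continuousAt).div continuousAt_id hx.ne'
  have hmeas : StronglyMeasurableAtFilter (fun t : ℝ => Real.exp (-t) / t) (nhds x) :=
    ⟨univ, univ_mem, g_measurable.aestronglyMeasurable.restrict⟩
  have hint : IntervalIntegrable (fun t : ℝ => Real.exp (-t) / t) volume x x := by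
    simp [intervalIntegrable_iff]
  have hd := intervalIntegral.integral_hasDerivAt_right hint hmeas hcont
  have hd2 : HasDerivAt (fun u => K x - (1/2) * ∫ t in x..u, Real.exp (-t) / t)
      (-(Real.exp (-x) / x) / 2) x := by
    have := ((hd.const_mul (1/2 : ℝ)).const_sub (K x))
    refine this.congr_deriv ?_; ring
  refine hd2.congr_of_eventuallyEq ?_
  filter_upwards [eventually_gt_nhds hx] with u hu
  exact K_eq hx hu

lemma K_lower {x : ℝ} (hx : 0 < x) : Real.exp (-x) / (2 * (x + 1)) ≤ K x := by
  have h := K_ge hx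
  unfold K; rw [abs_of_pos hx]
  rw [div_le_iff₀ (by positivity), mul_comm] at *
  nlinarith [Real.exp_pos (-x)]

lemma K_upper {x : ℝ} (hx : 0 < x) : K x ≤ Real.exp (-x) / (2 * x) := by
  have h := K_le hx
  unfold K; rw [abs_of_pos hx]
  rw [le_div_iff₀ hx] at h
  rw [le_div_iff₀ (by linarith : (0:ℝ) < 2*x)]
  nlinarith

lemma K_nonneg {x : ℝ} (hx : 0 < x) : 0 ≤ K x :=
  le_trans (by positivity) (K_lower hx)

lemma f_hasDerivAt {x : ℝ} (hx : 0 < x) :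
    HasDerivAt f (Real.exp (-x) / 2 - (1 + x) * K x) x := by
  have hexp : HasDerivAt (fun x : ℝ => Real.exp (-x)) (-Real.exp (-x)) x := by
    have := (Real.hasDerivAt_exp (-x)).comp x (hasDerivAt_neg x)
    simpa [Function.comp_def] using this
  have hA : HasDerivAt (fun x : ℝ => Real.exp (-x) / 4 * (1 + x))
      ((-Real.exp (-x) / 4) * (1 + x) + Real.exp (-x) / 4 * 1) x :=
    (hexp.div_const 4).mul ((hasDerivAt_id x).const_add 1)
  have hB : HasDerivAt (fun x : ℝ => x / 2 * K x * (2 + x))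
      (((1/2) * K x + x / 2 * (-(Real.exp (-x) / x) / 2)) * (2 + x)
        + x / 2 * K x * 1) x := by
    have h1 : HasDerivAt (fun x : ℝ => x / 2) (1/2) x := by
      simpa using (hasDerivAt_id x).div_const 2
    exact ((h1.mul (K_hasDerivAt hx)).mul ((hasDerivAt_id x).const_add 2))
  have := hA.sub hB
  refine this.congr_deriv ?_
  have hx0 : x ≠ 0 := hx.ne'
  field_simp
  ring

theorem f_properties :
    AntitoneOn f (Set.Ioi 0) ∧ f 0 = 1/4 ∧
      Filter.Tendsto f Filter.atTop (nhds 0) ∧ ∀ x ≥ (0:ℝ), 0 ≤ f x := by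
  have hanti : AntitoneOn f (Set.Ioi 0) := by
    apply antitoneOn_of_deriv_nonpos (convex_Ioi 0)
    · exact fun x hx => (f_hasDerivAt hx).continuousAt.continuousWithinAt
    · rw [interior_Ioi]; exact fun x hx => (f_hasDerivAt hx).differentiableAt.differentiableWithinAt
    · rw [interior_Ioi]
      intro x hx
      have hx0 : (0:ℝ) < x := hx
      rw [(f_hasDerivAt hx).deriv]
      have hK := K_lower hx0
      rw [div_le_iff₀ (by linarith : (0:ℝ) < 2*(x+1))] at hK
      nlinarith [Real.exp_pos (-x)]
  have hf0 : f 0 = 1/4 := by norm_num [f]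
  have htends : Filter.Tendsto f Filter.atTop (nhds 0) := by
    have hup : Tendsto (fun x : ℝ => Real.exp (-x) / 4 * (1 + x)) atTop (nhds 0) := by
      have h1 : Tendsto (fun x : ℝ => Real.exp (-x)) atTop (nhds 0) :=
        Real.tendsto_exp_neg_atTop_nhds_zero
      have h2 : Tendsto (fun x : ℝ => x * Real.exp (-x)) atTop (nhds 0) := by
        have := Real.tendsto_pow_mul_exp_neg_atTop_nhds_zero 1
        simpa using this
      have := (h1.add h2).div_const 4
      simp only [add_zero, zero_div] at this
      refine this.congr (fun x => by ring)
    have hlo : Tendsto (fun x : ℝ => -(Real.exp (-x) / 4)) atTop (nhds 0) := by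
      have := Real.tendsto_exp_neg_atTop_nhds_zero.div_const 4 |>.neg
      simpa using this
    refine tendsto_of_tendsto_of_tendsto_of_le_of_le' hlo hup ?_ ?_
    · filter_upwards [eventually_gt_atTop (0:ℝ)] with x hx
      have hK := K_upper hx
      have h1 : x / 2 * K x * (2 + x) ≤ Real.exp (-x) * (2 + x) / 4 := by
        rw [le_div_iff₀ (by linarith : (0:ℝ) < 2 * x)] at hK
        nlinarith [K_nonneg hx, Real.exp_pos (-x)]
      unfold f
      nlinarith [Real.exp_pos (-x)]
    · filter_upwards [eventually_gt_atTop (0:ℝ)] with x hx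
      have h1 : 0 ≤ x / 2 * K x * (2 + x) := by
        have := K_nonneg hx
        positivity
      unfold f
      nlinarith [Real.exp_pos (-x)]
  refine ⟨hanti, hf0, htends, ?_⟩
  intro x hx
  rcases eq_or_lt_of_le hx with rfl | hx'
  · rw [hf0]; norm_num
  · refine le_of_tendsto htends ?_
    filter_upwards [eventually_ge_atTop x] with y hy
    exact hanti hx' (lt_of_lt_of_le hx' hy) hy
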